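/- Let α be a good endomorphism of R and I a C-hyperideal such that for all a, b ∈ R, a∘b ⊆ I implies a ∈ I or α(bⁿ) ⊆ I for some n ∈ ℕ. Then ᵅ√I is an α-prime hyperideal of R. -/
import Mathlib


open Pointwise

namespace HyperPaper

/-- A commutative multiplicative hyperring on an additive commutative group:
the hypermultiplication is associative, commutative, subdistributive over `+`,
and compatible with negation. -/
structure MulHyperring (R : Type*) [AddCommGroup R] where
  hmul : R → R → Set R
  nonempty : ∀ a b, (hmul a b).Nonempty
  comm : ∀ a b, hmul a b = hmul b a
  assoc : ∀ a b c, (⋃ t ∈ hmul a b, hmul t c) = ⋃ t ∈ hmul b c, hmul a t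
  distrib : ∀ a b c, hmul a (b + c) ⊆ hmul a b + hmul a c
  hmul_neg : ∀ a b, hmul a (-b) = -(hmul a b)

variable {R : Type*} [AddCommGroup R]

/-- Product of two subsets under the hyperoperation. -/
def MulHyperring.setMul (H : MulHyperring R) (A B : Set R) : Set R :=
  ⋃ a ∈ A, ⋃ b ∈ B, H.hmul a b

/-- `H.hpow a n` is the `(n+1)`-fold hyperproduct `a ∘ a ∘ ⋯ ∘ a`. -/
def MulHyperring.hpow (H : MulHyperring R) (a : R) : ℕ → Set R
  | 0 => {a}
  | n + 1 => H.setMul {a} (H.hpow a n)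

/-- `H.hprod a l` is the hyperproduct of the list `a :: l`. -/
def MulHyperring.hprod (H : MulHyperring R) (a : R) : List R → Set R
  | [] => {a}
  | b :: l => H.setMul {a} (H.hprod b l)

/-- A hyperideal: an additive subgroup absorbing hypermultiplication. -/
structure Hyperideal (H : MulHyperring R) where
  carrier : Set R
  zero_mem : (0 : R) ∈ carrier
  sub_mem : ∀ a b, a ∈ carrier → b ∈ carrier → a - b ∈ carrier
  absorb : ∀ r x, x ∈ carrier → H.hmul r x ⊆ carrier

/-- A C-hyperideal: any finite hyperproduct meeting it is contained in it. -/
def IsCHyperideal (H : MulHyperring R) (I : Hyperideal H) : Prop :=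
  ∀ a (l : List R), (H.hprod a l ∩ I.carrier).Nonempty → H.hprod a l ⊆ I.carrier

/-- A good homomorphism between multiplicative hyperrings. -/
def IsGoodHom {R₁ R₂ : Type*} [AddCommGroup R₁] [AddCommGroup R₂]
    (H₁ : MulHyperring R₁) (H₂ : MulHyperring R₂) (f : R₁ → R₂) : Prop :=
  (∀ x y, f (x + y) = f x + f y) ∧ ∀ x y, f '' H₁.hmul x y = H₂.hmul (f x) (f y)

/-- A good endomorphism. -/
def IsGoodEndo (H : MulHyperring R) (α : R → R) : Prop :=
  IsGoodHom H H α

/-- A proper hyperideal `I` is `α`-prime if `x ∘ y ⊆ I` implies `x ∈ I` or `α y ∈ I`. -/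
def IsAlphaPrime (H : MulHyperring R) (α : R → R) (I : Hyperideal H) : Prop :=
  I.carrier ≠ Set.univ ∧
    ∀ x y, H.hmul x y ⊆ I.carrier → x ∈ I.carrier ∨ α y ∈ I.carrier

/-- A proper hyperideal `I` is prime if `x ∘ y ⊆ I` implies `x ∈ I` or `y ∈ I`. -/
def IsPrime (H : MulHyperring R) (I : Hyperideal H) : Prop :=
  I.carrier ≠ Set.univ ∧
    ∀ x y, H.hmul x y ⊆ I.carrier → x ∈ I.carrier ∨ y ∈ I.carrier

/-- The radical `√S = {r | rⁿ ⊆ S for some n}`. -/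
def radical (H : MulHyperring R) (S : Set R) : Set R :=
  {r | ∃ n : ℕ, H.hpow r n ⊆ S}

/-- The `α`-radical `ᵅ√S = {r | α(rⁿ) ⊆ S for some n}`. -/
def alphaRad (H : MulHyperring R) (α : R → R) (S : Set R) : Set R :=
  {r | ∃ n : ℕ, α '' H.hpow r n ⊆ S}

/-- The set of `α`-nilpotent elements. -/
def nilAlpha (H : MulHyperring R) (α : R → R) : Set R :=
  {x | ∃ n : ℕ, (0 : R) ∈ α '' H.hpow x n}

/-- The `n`-fold set power of a hyperideal carrier: `idealPow H S n = S^(n+1)`. -/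
def idealPow (H : MulHyperring R) (S : Set R) : ℕ → Set R
  | 0 => S
  | n + 1 => H.setMul S (idealPow H S n)

namespace Stmt17Aux

variable {R : Type*} [AddCommGroup R]

theorem mem_setMul (H : MulHyperring R) {A B : Set R} {w : R} :
    w ∈ H.setMul A B ↔ ∃ a ∈ A, ∃ b ∈ B, w ∈ H.hmul a b := by
  simp [MulHyperring.setMul]

theorem setMul_mono (H : MulHyperring R) {A A' B B' : Set R}
    (hA : A ⊆ A') (hB : B ⊆ B') : H.setMul A B ⊆ H.setMul A' B' := by
  intro w hw
  rw [mem_setMul] at hw ⊢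
  obtain ⟨a, ha, b, hb, h⟩ := hw
  exact ⟨a, hA ha, b, hB hb, h⟩

theorem setMul_comm (H : MulHyperring R) (A B : Set R) :
    H.setMul A B = H.setMul B A := by
  ext w
  rw [mem_setMul, mem_setMul]
  constructor <;> rintro ⟨a, ha, b, hb, h⟩ <;>
    exact ⟨b, hb, a, ha, by rwa [H.comm]⟩

theorem setMul_assoc (H : MulHyperring R) (A B C : Set R) :
    H.setMul (H.setMul A B) C = H.setMul A (H.setMul B C) := by
  ext w
  rw [mem_setMul, mem_setMul]
  constructor
  · rintro ⟨t, ht, c, hc, hw⟩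
    rw [mem_setMul] at ht
    obtain ⟨a, ha, b, hb, htab⟩ := ht
    have hw' : w ∈ ⋃ t ∈ H.hmul a b, H.hmul t c := Set.mem_biUnion htab hw
    rw [H.assoc a b c] at hw'
    obtain ⟨s, hs, hws⟩ := Set.mem_iUnion₂.mp hw'
    exact ⟨a, ha, s, (mem_setMul H).mpr ⟨b, hb, c, hc, hs⟩, hws⟩
  · rintro ⟨a, ha, s, hs, hw⟩
    rw [mem_setMul] at hs
    obtain ⟨b, hb, c, hc, hsbc⟩ := hs
    have hw' : w ∈ ⋃ t ∈ H.hmul b c, H.hmul a t := Set.mem_biUnion hsbc hw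
    rw [← H.assoc a b c] at hw'
    obtain ⟨t, ht, hwt⟩ := Set.mem_iUnion₂.mp hw'
    exact ⟨t, (mem_setMul H).mpr ⟨a, ha, b, hb, ht⟩, c, hc, hwt⟩

theorem setMul_singleton (H : MulHyperring R) (x y : R) :
    H.setMul {x} {y} = H.hmul x y := by
  simp [MulHyperring.setMul]

theorem hpow_succ (H : MulHyperring R) (a : R) (n : ℕ) :
    H.hpow a (n + 1) = H.setMul {a} (H.hpow a n) := rfl

theorem setMul_hpow (H : MulHyperring R) (a : R) (p q : ℕ) :
    H.setMul (H.hpow a p) (H.hpow a q) = H.hpow a (p + q + 1) := by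
  induction p with
  | zero => rw [Nat.zero_add]; rfl
  | succ p ih =>
    rw [hpow_succ, setMul_assoc, ih]
    have h : p + 1 + q + 1 = p + q + 1 + 1 := by omega
    rw [h]
    rfl

theorem setMul_nonempty (H : MulHyperring R) {A B : Set R}
    (hA : A.Nonempty) (hB : B.Nonempty) : (H.setMul A B).Nonempty := by
  obtain ⟨a, ha⟩ := hA
  obtain ⟨b, hb⟩ := hB
  obtain ⟨w, hw⟩ := H.nonempty a b
  exact ⟨w, (mem_setMul H).mpr ⟨a, ha, b, hb, hw⟩⟩

theorem hpow_nonempty (H : MulHyperring R) (a : R) (n : ℕ) :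
    (H.hpow a n).Nonempty := by
  induction n with
  | zero => exact ⟨a, rfl⟩
  | succ n ih => exact setMul_nonempty H ⟨a, rfl⟩ ih

theorem hpow_eq_hprod (H : MulHyperring R) (a : R) (n : ℕ) :
    H.hpow a n = H.hprod a (List.replicate n a) := by
  induction n with
  | zero => rfl
  | succ n ih => rw [List.replicate_succ]; show H.setMul {a} _ = H.setMul {a} _; rw [ih]

theorem hmul_eq_hprod (H : MulHyperring R) (x y : R) :
    H.hmul x y = H.hprod x [y] := by
  show _ = H.setMul {x} (H.hprod y [])
  rw [show H.hprod y [] = {y} from rfl, setMul_singleton]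

theorem map_zero' {α : R → R} (hadd : ∀ x y, α (x + y) = α x + α y) :
    α 0 = 0 := by
  have := hadd 0 0
  rw [add_zero] at this
  exact (left_eq_add.mp this)

theorem map_neg' {α : R → R} (hadd : ∀ x y, α (x + y) = α x + α y) (x : R) :
    α (-x) = -α x := by
  have := hadd x (-x)
  rw [add_neg_cancel, map_zero' hadd] at this
  exact (eq_neg_of_add_eq_zero_right this.symm)

theorem image_setMul (H : MulHyperring R) {α : R → R}
    (hgood : ∀ x y, α '' H.hmul x y = H.hmul (α x) (α y)) (A B : Set R) :
    α '' H.setMul A B = H.setMul (α '' A) (α '' B) := by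
  ext w
  constructor
  · rintro ⟨v, hv, rfl⟩
    rw [mem_setMul] at hv
    obtain ⟨a, ha, b, hb, h⟩ := hv
    refine (mem_setMul H).mpr ⟨α a, ⟨a, ha, rfl⟩, α b, ⟨b, hb, rfl⟩, ?_⟩
    rw [← hgood]
    exact ⟨v, h, rfl⟩
  · intro hw
    rw [mem_setMul] at hw
    obtain ⟨a', ⟨a, ha, rfl⟩, b', ⟨b, hb, rfl⟩, h⟩ := hw
    rw [← hgood] at h
    obtain ⟨v, hv, rfl⟩ := h
    exact ⟨v, (mem_setMul H).mpr ⟨a, ha, b, hb, hv⟩, rfl⟩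

theorem image_hpow (H : MulHyperring R) {α : R → R}
    (hgood : ∀ x y, α '' H.hmul x y = H.hmul (α x) (α y)) (a : R) (n : ℕ) :
    α '' H.hpow a n = H.hpow (α a) n := by
  induction n with
  | zero => simp [MulHyperring.hpow]
  | succ n ih => rw [hpow_succ, image_setMul H hgood, Set.image_singleton, ih]; rfl

theorem hpow_subset_setMul (H : MulHyperring R) {t x y : R}
    (ht : t ∈ H.hmul x y) (n : ℕ) :
    H.hpow t n ⊆ H.setMul (H.hpow x n) (H.hpow y n) := by
  induction n with
  | zero =>
    rw [show H.hpow x 0 = {x} from rfl, show H.hpow y 0 = {y} from rfl, setMul_singleton]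
    exact Set.singleton_subset_iff.mpr ht
  | succ n ih =>
    rw [hpow_succ]
    refine (setMul_mono H (Set.singleton_subset_iff.mpr ht) ih).trans ?_
    rw [← setMul_singleton H x y]
    rw [setMul_assoc, ← setMul_assoc H {y}, setMul_comm H {y} (H.hpow x n),
      setMul_assoc, ← setMul_assoc]
    rfl

theorem hpow_subset_hpow (H : MulHyperring R) {s b : R} {m : ℕ}
    (hs : s ∈ H.hpow b m) (k : ℕ) :
    H.hpow s k ⊆ H.hpow b (m + k * (m + 1)) := by
  induction k with
  | zero =>
    rw [show m + 0 * (m + 1) = m by ring, show H.hpow s 0 = {s} from rfl]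
    exact Set.singleton_subset_iff.mpr hs
  | succ k ih =>
    rw [hpow_succ]
    refine (setMul_mono H (Set.singleton_subset_iff.mpr hs) ih).trans ?_
    rw [setMul_hpow]
    have h : m + (m + k * (m + 1)) + 1 = m + (k + 1) * (m + 1) := by ring
    rw [h]

theorem Ideal.neg_mem (H : MulHyperring R) (I : Hyperideal H) {x : R}
    (hx : x ∈ I.carrier) : -x ∈ I.carrier := by
  have := I.sub_mem 0 x I.zero_mem hx
  rwa [zero_sub] at this

theorem Ideal.add_mem (H : MulHyperring R) (I : Hyperideal H) {x y : R}
    (hx : x ∈ I.carrier) (hy : y ∈ I.carrier) : x + y ∈ I.carrier := by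
  have := I.sub_mem x (-y) hx (Ideal.neg_mem H I hy)
  rwa [sub_neg_eq_add] at this

theorem setMul_subset_right (H : MulHyperring R) (I : Hyperideal H)
    {A B : Set R} (hB : B ⊆ I.carrier) : H.setMul A B ⊆ I.carrier := by
  intro w hw
  rw [mem_setMul] at hw
  obtain ⟨a, _, b, hb, h⟩ := hw
  exact I.absorb a b (hB hb) h

theorem setMul_subset_left (H : MulHyperring R) (I : Hyperideal H)
    {A B : Set R} (hA : A ⊆ I.carrier) : H.setMul A B ⊆ I.carrier := by
  rw [setMul_comm]
  exact setMul_subset_right H I hA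

theorem image_hpow_mono (H : MulHyperring R) (I : Hyperideal H) {α : R → R}
    (hgood : ∀ x y, α '' H.hmul x y = H.hmul (α x) (α y))
    {a : R} {m : ℕ} (hm : α '' H.hpow a m ⊆ I.carrier) :
    ∀ k, m ≤ k → α '' H.hpow a k ⊆ I.carrier := by
  intro k hk
  obtain ⟨d, rfl⟩ := Nat.exists_eq_add_of_le hk
  induction d with
  | zero => simpa using hm
  | succ d ih =>
    have h : m + (d + 1) = (m + d) + 1 := by omega
    rw [h, hpow_succ, image_setMul H hgood, Set.image_singleton]
    exact setMul_subset_right H I (ih (by omega))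

theorem neg_hmul (H : MulHyperring R) (x y : R) :
    H.hmul (-x) y = -(H.hmul x y) := by
  rw [H.comm, H.hmul_neg, H.comm]

theorem setMul_singleton_neg_left (H : MulHyperring R) (b : R) (S : Set R) :
    H.setMul {-b} S = -(H.setMul {b} S) := by
  ext w
  rw [Set.mem_neg, mem_setMul, mem_setMul]
  constructor
  · rintro ⟨a, rfl, s, hs, h⟩
    rw [neg_hmul, Set.mem_neg] at h
    exact ⟨b, rfl, s, hs, h⟩
  · rintro ⟨a, ha, s, hs, h⟩
    rw [Set.mem_singleton_iff] at ha
    rw [ha] at h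
    refine ⟨-b, rfl, s, hs, ?_⟩
    rw [neg_hmul, Set.mem_neg]
    exact h

theorem setMul_singleton_neg_right (H : MulHyperring R) (b : R) (S : Set R) :
    H.setMul {b} (-S) = -(H.setMul {b} S) := by
  ext w
  rw [Set.mem_neg, mem_setMul, mem_setMul]
  constructor
  · rintro ⟨a, rfl, s, hs, h⟩
    rw [Set.mem_neg] at hs
    refine ⟨a, rfl, -s, hs, ?_⟩
    rw [H.hmul_neg, Set.mem_neg, neg_neg]
    exact h
  · rintro ⟨a, rfl, s, hs, h⟩
    refine ⟨a, rfl, -s, by rwa [Set.mem_neg, neg_neg], ?_⟩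
    rw [H.hmul_neg, Set.mem_neg]
    exact h

theorem hpow_neg (H : MulHyperring R) (b : R) (k : ℕ) :
    H.hpow (-b) k = H.hpow b k ∨ H.hpow (-b) k = -(H.hpow b k) := by
  induction k with
  | zero => right; simp [MulHyperring.hpow]
  | succ k ih =>
    rcases ih with ih | ih
    · right
      rw [hpow_succ, ih, setMul_singleton_neg_left, hpow_succ]
    · left
      rw [hpow_succ, ih, setMul_singleton_neg_right, setMul_singleton_neg_left,
        neg_neg, hpow_succ]

theorem image_neg {α : R → R} (hadd : ∀ x y, α (x + y) = α x + α y) (S : Set R) :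
    α '' (-S) = -(α '' S) := by
  ext w
  rw [Set.mem_neg]
  constructor
  · rintro ⟨v, hv, rfl⟩
    rw [Set.mem_neg] at hv
    exact ⟨-v, hv, map_neg' hadd v⟩
  · rintro ⟨v, hv, h⟩
    exact ⟨-v, by rwa [Set.mem_neg, neg_neg], by rw [map_neg' hadd v, h, neg_neg]⟩


def mix (H : MulHyperring R) (a c : R) : ℕ → ℕ → Set R
  | 0, 0 => ∅
  | i+1, 0 => H.hpow a i
  | 0, j+1 => H.hpow c j
  | i+1, j+1 => H.setMul (H.hpow a i) (H.hpow c j)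

theorem mix_succ_left (H : MulHyperring R) (a c : R) (i j : ℕ) (h : i + j ≠ 0) :
    H.setMul {a} (mix H a c i j) = mix H a c (i+1) j := by
  match i, j with
  | 0, 0 => exact absurd rfl h
  | i+1, 0 => rfl
  | 0, j+1 => rfl
  | i+1, j+1 =>
    show H.setMul {a} (H.setMul (H.hpow a i) (H.hpow c j)) = H.setMul (H.hpow a (i+1)) (H.hpow c j)
    rw [← setMul_assoc]
    rfl

theorem mix_succ_right (H : MulHyperring R) (a c : R) (i j : ℕ) (h : i + j ≠ 0) :
    H.setMul {c} (mix H a c i j) = mix H a c i (j+1) := by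
  match i, j with
  | 0, 0 => exact absurd rfl h
  | 0, j+1 => rfl
  | i+1, 0 =>
    show H.setMul {c} (H.hpow a i) = H.setMul (H.hpow a i) (H.hpow c 0)
    rw [setMul_comm]
    rfl
  | i+1, j+1 =>
    show H.setMul {c} (H.setMul (H.hpow a i) (H.hpow c j))
      = H.setMul (H.hpow a i) (H.hpow c (j+1))
    rw [setMul_comm H {c}, setMul_assoc, setMul_comm H (H.hpow c j) {c}]
    rfl

def binGen (H : MulHyperring R) (a c : R) (N : ℕ) : Set R :=
  ⋃ i ∈ Set.Iic (N+1), mix H a c i (N+1-i)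

theorem mem_binGen (H : MulHyperring R) {a c : R} {N : ℕ} {g : R}
    (i : ℕ) (hi : i ≤ N + 1) (hg : g ∈ mix H a c i (N+1-i)) :
    g ∈ binGen H a c N :=
  Set.mem_biUnion hi hg

theorem hpow_add_subset_closure (H : MulHyperring R)
    (hzero : ∀ r : R, H.hmul 0 r = {(0:R)}) (a c : R) (N : ℕ) :
    H.hpow (a+c) N ⊆ (AddSubgroup.closure (binGen H a c N) : Set R) := by
  induction N with
  | zero =>
    intro w hw
    rw [show H.hpow (a+c) 0 = {a+c} from rfl, Set.mem_singleton_iff] at hw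
    subst hw
    have ha : a ∈ binGen H a c 0 :=
      mem_binGen H 1 (by omega) (show a ∈ mix H a c 1 0 from rfl)
    have hc : c ∈ binGen H a c 0 :=
      mem_binGen H 0 (by omega) (show c ∈ mix H a c 0 1 from rfl)
    exact AddSubgroup.add_mem _ (AddSubgroup.subset_closure ha)
      (AddSubgroup.subset_closure hc)
  | succ N ih =>
    set CL := AddSubgroup.closure (binGen H a c (N+1)) with hCL
    set K : AddSubgroup R :=
      { carrier := {s | H.hmul (a+c) s ⊆ (CL : Set R)}
        zero_mem' := by
          show H.hmul (a+c) 0 ⊆ (CL : Set R)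
          rw [H.comm, hzero]
          exact Set.singleton_subset_iff.mpr CL.zero_mem
        add_mem' := by
          intro s₁ s₂ h₁ h₂
          show H.hmul (a+c) (s₁ + s₂) ⊆ (CL : Set R)
          refine (H.distrib (a+c) s₁ s₂).trans ?_
          intro w hw
          rw [Set.mem_add] at hw
          obtain ⟨u, hu, v, hv, rfl⟩ := hw
          exact CL.add_mem (h₁ hu) (h₂ hv)
        neg_mem' := by
          intro s hs
          show H.hmul (a+c) (-s) ⊆ (CL : Set R)
          rw [H.hmul_neg]
          intro w hw
          rw [Set.mem_neg] at hw
          simpa using CL.neg_mem (hs hw) } with hK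
    have hgen : binGen H a c N ⊆ (K : Set R) := by
      intro g hg
      obtain ⟨i, hi, hgm⟩ := Set.mem_iUnion₂.mp hg
      rw [Set.mem_Iic] at hi
      show H.hmul (a+c) g ⊆ (CL : Set R)
      rw [H.comm]
      refine (H.distrib g a c).trans ?_
      intro w hw
      rw [Set.mem_add] at hw
      obtain ⟨u, hu, v, hv, rfl⟩ := hw
      have hne : i + (N+1-i) ≠ 0 := by omega
      have hu' : u ∈ mix H a c (i+1) (N+1-i) := by
        rw [← mix_succ_left H a c i (N+1-i) hne]
        exact (mem_setMul H).mpr ⟨a, rfl, g, hgm, by rwa [H.comm] at hu⟩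
      have hv' : v ∈ mix H a c i (N+1-i+1) := by
        rw [← mix_succ_right H a c i (N+1-i) hne]
        exact (mem_setMul H).mpr ⟨c, rfl, g, hgm, by rwa [H.comm] at hv⟩
      have hu'' : u ∈ binGen H a c (N+1) := by
        refine mem_binGen H (i+1) (by omega) ?_
        rw [show N+1+1-(i+1) = N+1-i by omega]
        exact hu'
      have hv'' : v ∈ binGen H a c (N+1) := by
        refine mem_binGen H i (by omega) ?_
        rw [show N+1+1-i = N+1-i+1 by omega]
        exact hv'
      exact CL.add_mem (AddSubgroup.subset_closure hu'')
        (AddSubgroup.subset_closure hv'')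
    have hle : AddSubgroup.closure (binGen H a c N) ≤ K :=
      (AddSubgroup.closure_le K).mpr hgen
    intro w hw
    rw [hpow_succ, mem_setMul] at hw
    obtain ⟨z, hz, s, hs, h⟩ := hw
    rw [Set.mem_singleton_iff] at hz
    subst hz
    exact hle (ih hs) h

end Stmt17Aux

end HyperPaper

open HyperPaper

/-- If for all `a b`, `a∘b ⊆ I` implies `a ∈ I` or `α(bⁿ) ⊆ I` for
some `n`, then `ᵅ√I` is an `α`-prime hyperideal. -/
theorem stmt17 {R : Type*} [AddCommGroup R] (H : MulHyperring R) (α : R → R)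
    (hα : IsGoodEndo H α) (hzero : ∀ r : R, H.hmul 0 r = {(0 : R)})
    (I : Hyperideal H) (hC : IsCHyperideal H I)
    (hcond : ∀ a b : R, H.hmul a b ⊆ I.carrier →
      a ∈ I.carrier ∨ ∃ n : ℕ, α '' H.hpow b n ⊆ I.carrier)
    (hproper : alphaRad H α I.carrier ≠ Set.univ) :
    ∃ J : Hyperideal H, J.carrier = alphaRad H α I.carrier ∧
      IsAlphaPrime H α J := by
  obtain ⟨hadd, hgood⟩ := hα
  open Stmt17Aux in
  refine ⟨{ carrier := alphaRad H α I.carrier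
            zero_mem := ⟨0, by
              rw [show H.hpow (0:R) 0 = {(0:R)} from rfl, Set.image_singleton,
                map_zero' hadd]
              exact Set.singleton_subset_iff.mpr I.zero_mem⟩
            sub_mem := ?_
            absorb := ?_ }, rfl, hproper, ?_⟩
  · -- sub_mem
    rintro a b ⟨m, hm⟩ ⟨n, hn⟩
    have ha' : ∀ k, m ≤ k → α '' H.hpow a k ⊆ I.carrier :=
      Stmt17Aux.image_hpow_mono H I hgood hm
    have hc' : ∀ k, n ≤ k → α '' H.hpow (-b) k ⊆ I.carrier := by
      intro k hk
      rcases Stmt17Aux.hpow_neg H b k with h | h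
      · rw [h]; exact Stmt17Aux.image_hpow_mono H I hgood hn k hk
      · rw [h, Stmt17Aux.image_neg hadd]
        intro w hw
        rw [Set.mem_neg] at hw
        have := Stmt17Aux.image_hpow_mono H I hgood hn k hk hw
        simpa using Stmt17Aux.Ideal.neg_mem H I this
    set N := m + n + 1 with hN
    refine ⟨N, ?_⟩
    set K2 : AddSubgroup R :=
      { carrier := {x | α x ∈ I.carrier}
        zero_mem' := by
          show α 0 ∈ I.carrier
          rw [Stmt17Aux.map_zero' hadd]
          exact I.zero_mem
        add_mem' := by
          intro x y hx hy
          show α (x + y) ∈ I.carrier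
          rw [hadd]
          exact Stmt17Aux.Ideal.add_mem H I hx hy
        neg_mem' := by
          intro x hx
          show α (-x) ∈ I.carrier
          rw [Stmt17Aux.map_neg' hadd]
          exact Stmt17Aux.Ideal.neg_mem H I hx } with hK2
    have hgen : binGen H a (-b) N ⊆ (K2 : Set R) := by
      intro g hg
      obtain ⟨i, hi, hgm⟩ := Set.mem_iUnion₂.mp hg
      rw [Set.mem_Iic] at hi
      show α g ∈ I.carrier
      match i, (N+1-i), (by omega : i + (N+1-i) = N+1), hgm with
      | 0, 0, hij, hgm => omega
      | 0, j+1, hij, hgm =>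
        exact hc' j (by omega) ⟨g, hgm, rfl⟩
      | i+1, 0, hij, hgm =>
        exact ha' i (by omega) ⟨g, hgm, rfl⟩
      | i+1, j+1, hij, hgm =>
        have hmem : α g ∈ H.setMul (α '' H.hpow a i) (α '' H.hpow (-b) j) := by
          rw [← Stmt17Aux.image_setMul H hgood]
          exact ⟨g, hgm, rfl⟩
        by_cases hcase : m ≤ i
        · exact Stmt17Aux.setMul_subset_left H I (ha' i hcase) hmem
        · exact Stmt17Aux.setMul_subset_right H I (hc' j (by omega)) hmem
    have hle : AddSubgroup.closure (binGen H a (-b) N) ≤ K2 :=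
      (AddSubgroup.closure_le K2).mpr hgen
    rintro w ⟨v, hv, rfl⟩
    rw [sub_eq_add_neg] at hv
    exact hle (Stmt17Aux.hpow_add_subset_closure H hzero a (-b) N hv) 
  · -- absorb
    rintro r x ⟨n, hn⟩ t ht
    refine ⟨n, ?_⟩
    rintro w ⟨v, hv, rfl⟩
    have hsub := Stmt17Aux.hpow_subset_setMul H ht n hv
    have h2 : α v ∈ H.setMul (α '' H.hpow r n) (α '' H.hpow x n) := by
      rw [← Stmt17Aux.image_setMul H hgood]
      exact ⟨v, hsub, rfl⟩
    exact Stmt17Aux.setMul_subset_right H I hn h2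
  · -- α-prime
    intro x y hxy
    obtain ⟨t, ht⟩ := H.nonempty x y
    obtain ⟨n, hn⟩ := hxy ht
    obtain ⟨w, hw⟩ := Stmt17Aux.hpow_nonempty H t n
    have hw2 := Stmt17Aux.hpow_subset_setMul H ht n hw
    rw [Stmt17Aux.mem_setMul] at hw2
    obtain ⟨u, hu, v, hv, hwuv⟩ := hw2
    have hαw : α w ∈ I.carrier := hn ⟨w, hw, rfl⟩
    have huv : α w ∈ H.hmul (α u) (α v) := by
      rw [← hgood]
      exact ⟨w, hwuv, rfl⟩
    have hCuv : H.hmul (α u) (α v) ⊆ I.carrier := by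
      have := hC (α u) [α v]
        ⟨α w, by rw [← Stmt17Aux.hmul_eq_hprod]; exact huv, hαw⟩
      rwa [← Stmt17Aux.hmul_eq_hprod] at this
    rcases hcond (α u) (α v) hCuv with h1 | ⟨k, h2⟩
    · left
      refine ⟨n, ?_⟩
      rw [Stmt17Aux.image_hpow H hgood]
      have h3 : α u ∈ H.hpow (α x) n := by
        rw [← Stmt17Aux.image_hpow H hgood]
        exact ⟨u, hu, rfl⟩
      have := hC (α x) (List.replicate n (α x))
        ⟨α u, by rw [← Stmt17Aux.hpow_eq_hprod]; exact h3, h1⟩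
      rwa [← Stmt17Aux.hpow_eq_hprod] at this
    · right
      rw [Stmt17Aux.image_hpow H hgood] at h2
      have hv2 : α (α v) ∈ H.hpow (α (α y)) n := by
        rw [← Stmt17Aux.image_hpow H hgood, ← Stmt17Aux.image_hpow H hgood]
        exact ⟨α v, ⟨v, hv, rfl⟩, rfl⟩
      have h5 := Stmt17Aux.hpow_subset_hpow H hv2 k
      obtain ⟨z, hz⟩ := Stmt17Aux.hpow_nonempty H (α (α v)) k
      refine ⟨n + k * (n+1), ?_⟩
      rw [Stmt17Aux.image_hpow H hgood]
      have := hC (α (α y)) (List.replicate (n + k * (n+1)) (α (α y)))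
        ⟨z, by rw [← Stmt17Aux.hpow_eq_hprod]; exact h5 hz, h2 hz⟩
      rwa [← Stmt17Aux.hpow_eq_hprod] at this
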